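/- Let t and n be integers with 2 < t ≤ n, and let λ be a real number with t−1 ≤ λ ≤ n−1. Then there exists a sequence s = (s_k)_{k≥1} with s_k ∈ {t, n} for every k such that the function k ↦ h(k) = (s_1−1)(s_2−1)···(s_k−1) (with h(0)=1) is ≃-equivalent to the function k ↦ ⌈λ^k⌉. -/

import Mathlib

open SimpleGraph MulAction
open scoped ENNReal

universe u

variable {V : Type u}

/-- The automorphism group of a simple graph, as a subgroup of the permutation group
of its vertex set. -/
def SimpleGraph.autGroup (G : SimpleGraph V) : Subgroup (Equiv.Perm V) where
  carrier := {f | ∀ u v : V, G.Adj (f u) (f v) ↔ G.Adj u v}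
  one_mem' := by intro u v; simp
  mul_mem' := by
    intro a b ha hb u v
    simp only [Set.mem_setOf_eq, Equiv.Perm.mul_apply] at *
    rw [ha, hb]
  inv_mem' := by
    intro a ha u v
    simpa using (ha (a⁻¹ u) (a⁻¹ v)).symm

/-- A subgroup of the permutation group of the vertices is discrete if all vertex
stabilizers are finite. -/
def IsDiscreteSubgroup (Γ : Subgroup (Equiv.Perm V)) : Prop :=
  ∀ v : V, Finite (stabilizer Γ v)

/-- The `S`-covolume of a subgroup `Γ` of the permutation group of the vertices:
the sum of `1 / |Γ_v|` over the `Γ`-orbits meeting `S` (for `Γ`-invariant `S`, the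
orbits contained in `S`), where `v` is a representative of the orbit. -/
noncomputable def covolume (Γ : Subgroup (Equiv.Perm V)) (S : Set V) : ℝ≥0∞ :=
  ∑' O : {O : Quotient (orbitRel Γ V) // Quotient.out O ∈ S},
    ((Nat.card (stabilizer Γ (Quotient.out (O : Quotient (orbitRel Γ V))))) : ℝ≥0∞)⁻¹

/-- A lattice: a discrete subgroup with finite covolume with respect to the set of
all vertices. -/
def IsGraphLattice (Γ : Subgroup (Equiv.Perm V)) : Prop :=
  IsDiscreteSubgroup Γ ∧ covolume Γ Set.univ ≠ ⊤

/-- A nonuniform lattice: a lattice with infinitely many orbits of vertices. -/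
def IsNonuniformLattice (Γ : Subgroup (Equiv.Perm V)) : Prop :=
  IsGraphLattice Γ ∧ Infinite (Quotient (orbitRel Γ V))

/-- `f ⪯ g` : there are `a, b` with `f k ≤ a * g (k + b)` for all `k`. -/
def GrowthLE (f g : ℕ → ℕ) : Prop :=
  ∃ a b : ℕ, ∀ k : ℕ, f k ≤ a * g (k + b)

/-- Equivalence of growth types. -/
def GrowthEquiv (f g : ℕ → ℕ) : Prop :=
  GrowthLE f g ∧ GrowthLE g f

/-- The number of `Γ`-orbits of vertices meeting the ball of radius `k` about `x₀`. -/
noncomputable def quotientGrowth (G : SimpleGraph V) (Γ : Subgroup (Equiv.Perm V))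
    (x₀ : V) (k : ℕ) : ℕ :=
  Nat.card {O : Quotient (orbitRel Γ V) //
    ∃ v : V, Quotient.mk (orbitRel Γ V) v = O ∧ G.dist v x₀ ≤ k}

/-- The maximal order of a `Γ`-stabilizer of a vertex in the ball of radius `k`
about `x₀`. -/
noncomputable def stabilizerGrowth (G : SimpleGraph V) (Γ : Subgroup (Equiv.Perm V))
    (x₀ : V) (k : ℕ) : ℕ :=
  sSup {c : ℕ | ∃ v : V, G.dist v x₀ ≤ k ∧ c = Nat.card (stabilizer Γ v)}

/-- The `p`-order of a (finite) group order `k` : the largest power of `p` dividing `k`. -/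
def pOrder (p k : ℕ) : ℕ := p ^ (k.factorization p)

/-- The maximal `p`-order of a `Γ`-stabilizer of a vertex in the ball of radius `k`
about `x₀`. -/
noncomputable def pStabilizerGrowth (G : SimpleGraph V) (Γ : Subgroup (Equiv.Perm V))
    (p : ℕ) (x₀ : V) (k : ℕ) : ℕ :=
  sSup {c : ℕ | ∃ v : V, G.dist v x₀ ≤ k ∧ c = pOrder p (Nat.card (stabilizer Γ v))}

/-- `Γ` and `Γ'` are commensurable in (a subgroup) `A` of the permutation group:
some `A`-conjugate of `Γ` intersects `Γ'` in finite index in both. -/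
def CommensurableIn {GG : Type u} [Group GG] (A Γ Γ' : Subgroup GG) : Prop :=
  ∃ g ∈ A, Subgroup.Commensurable (Subgroup.map (MulAut.conj g).toMonoidHom Γ) Γ'

/-- An `(m,n)`-biregular tree with parts `V₀`, `V₁`. -/
structure IsBiregularTree (G : SimpleGraph V) (V₀ V₁ : Set V) (m n : ℕ) : Prop where
  connected : G.Connected
  acyclic : G.IsAcyclic
  disjoint : Disjoint V₀ V₁
  union : V₀ ∪ V₁ = Set.univ
  adj_parts : ∀ ⦃u v : V⦄, G.Adj u v → (u ∈ V₀ ∧ v ∈ V₁) ∨ (u ∈ V₁ ∧ v ∈ V₀)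
  degree₀ : ∀ v ∈ V₀, (G.neighborSet v).Finite ∧ (G.neighborSet v).ncard = m
  degree₁ : ∀ v ∈ V₁, (G.neighborSet v).Finite ∧ (G.neighborSet v).ncard = n

/-- A star tree of degree `m` with parts `V₀`, `V₁`. -/
structure IsStarTree (A : SimpleGraph V) (V₀ V₁ : Set V) (m : ℕ) : Prop where
  connected : A.Connected
  acyclic : A.IsAcyclic
  disjoint : Disjoint V₀ V₁
  union : V₀ ∪ V₁ = Set.univ
  adj_parts : ∀ ⦃u v : V⦄, A.Adj u v → (u ∈ V₀ ∧ v ∈ V₁) ∨ (u ∈ V₁ ∧ v ∈ V₀)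
  degree₀ : ∀ v ∈ V₀, (A.neighborSet v).Finite ∧ (A.neighborSet v).ncard = m
  degree₁ : ∀ v ∈ V₁, (A.neighborSet v).Finite ∧
    ((A.neighborSet v).ncard = 1 ∨ (A.neighborSet v).ncard = 2)

/-- The quotient graph `Γ\X`: vertices are `Γ`-orbits; two distinct orbits are
adjacent iff some vertex of one is adjacent to some vertex of the other. -/
def quotientGraph (G : SimpleGraph V) (Γ : Subgroup (Equiv.Perm V)) :
    SimpleGraph (Quotient (orbitRel Γ V)) where
  Adj O O' := O ≠ O' ∧ ∃ u v : V, Quotient.mk (orbitRel Γ V) u = O ∧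
    Quotient.mk (orbitRel Γ V) v = O' ∧ G.Adj u v
  symm := ⟨by
    rintro O O' ⟨hne, u, v, hu, hv, huv⟩
    exact ⟨hne.symm, v, u, hv, hu, huv.symm⟩⟩
  loopless := ⟨fun O h => h.1 rfl⟩

/-- An acceptable quotient growth function. -/
structure AcceptableGrowth (f : ℕ → ℕ) : Prop where
  base : f 0 = 1
  one_le : ∀ j : ℕ, 1 ≤ f (j + 1)
  le_two_mul : ∀ j : ℕ, f (j + 1) ≤ 2 * f j
  summable : Summable fun j : ℕ => (f j : ℝ) / 2 ^ j

/-- An `n`-admissible sequence `s`, indexed by `k ≥ 1`. -/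
def NAdmissible (n : ℕ) (s : ℕ → ℕ) : Prop :=
  ∀ k : ℕ, 1 ≤ k → s k ∣ n ∧ 2 < s k ∧ s k ≤ n

/-- The associated function `h j = (s 1 - 1) * ⋯ * (s j - 1)`, with `h 0 = 1`. -/
def admProd (s : ℕ → ℕ) (j : ℕ) : ℕ := ∏ i ∈ Finset.Icc 1 j, (s i - 1)

/-- Greedy auxiliary sequence for statement 15. -/
noncomputable def auxH (t n : ℕ) (lam : ℝ) : ℕ → ℕ
  | 0 => 1
  | k + 1 =>
    if (auxH t n lam k : ℝ) * ((n : ℝ) - 1) ≤ lam ^ (k + 1) then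
      auxH t n lam k * (n - 1)
    else
      auxH t n lam k * (t - 1)

lemma auxH_bounds {t n : ℕ} (ht : 2 < t) (htn : t ≤ n) {lam : ℝ}
    (h1 : (t : ℝ) - 1 ≤ lam) (h2 : lam ≤ (n : ℝ) - 1) (k : ℕ) :
    (auxH t n lam k : ℝ) ≤ lam ^ k ∧ lam ^ k ≤ (auxH t n lam k : ℝ) * ((n : ℝ) - 1) := by
  have hn3 : (3 : ℕ) ≤ n := le_trans ht htn
  have hlam2 : (2 : ℝ) ≤ lam := by
    have : (3 : ℝ) ≤ (t : ℝ) := by exact_mod_cast ht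
    linarith
  have hlam0 : (0 : ℝ) ≤ lam := by linarith
  have hn1 : (1 : ℝ) ≤ (n : ℝ) - 1 := by
    have : (3 : ℝ) ≤ (n : ℝ) := by exact_mod_cast hn3
    linarith
  have ht1 : (0 : ℝ) ≤ (t : ℝ) - 1 := by
    have : (3 : ℝ) ≤ (t : ℝ) := by exact_mod_cast ht
    linarith
  induction k with
  | zero =>
    constructor
    · simp [auxH]
    · simp only [auxH, pow_zero, Nat.cast_one, one_mul]; linarith
  | succ k ih =>
    obtain ⟨ih1, ih2⟩ := ih
    have hpow0 : (0 : ℝ) ≤ lam ^ k := pow_nonneg hlam0 k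
    have hH0 : (0 : ℝ) ≤ (auxH t n lam k : ℝ) := Nat.cast_nonneg _
    have hcastn : ((auxH t n lam k * (n - 1) : ℕ) : ℝ)
        = (auxH t n lam k : ℝ) * ((n : ℝ) - 1) := by
      push_cast [Nat.cast_sub (by omega : 1 ≤ n)]
      ring
    have hcastt : ((auxH t n lam k * (t - 1) : ℕ) : ℝ)
        = (auxH t n lam k : ℝ) * ((t : ℝ) - 1) := by
      push_cast [Nat.cast_sub (by omega : 1 ≤ t)]
      ring
    by_cases hc : (auxH t n lam k : ℝ) * ((n : ℝ) - 1) ≤ lam ^ (k + 1)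
    · rw [show auxH t n lam (k + 1) = auxH t n lam k * (n - 1) by
        rw [auxH]; exact if_pos hc, hcastn]
      constructor
      · exact hc
      · calc lam ^ (k + 1) = lam ^ k * lam := by ring
          _ ≤ ((auxH t n lam k : ℝ) * ((n : ℝ) - 1)) * ((n : ℝ) - 1) :=
            mul_le_mul ih2 h2 hlam0 (by positivity)
          _ = (auxH t n lam k : ℝ) * ((n : ℝ) - 1) * ((n : ℝ) - 1) := by ring
    · rw [show auxH t n lam (k + 1) = auxH t n lam k * (t - 1) by
        rw [auxH]; exact if_neg hc, hcastt]
      push_neg at hc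
      constructor
      · calc (auxH t n lam k : ℝ) * ((t : ℝ) - 1) ≤ lam ^ k * lam :=
            mul_le_mul ih1 h1 ht1 hpow0
          _ = lam ^ (k + 1) := by ring
      · have ht2 : (1 : ℝ) ≤ (t : ℝ) - 1 := by
          have : (3 : ℝ) ≤ (t : ℝ) := by exact_mod_cast ht
          linarith
        have hmono : (auxH t n lam k : ℝ) ≤ (auxH t n lam k : ℝ) * ((t : ℝ) - 1) :=
          le_mul_of_one_le_right hH0 ht2
        nlinarith

/-- For integers `2 < t ≤ n` and any real `λ` with
`t - 1 ≤ λ ≤ n - 1`, there is a sequence `s` with `s k ∈ {t, n}` for all `k ≥ 1`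
such that `k ↦ (s 1 - 1) ⋯ (s k - 1)` is equivalent to `k ↦ ⌈λ ^ k⌉`. -/
theorem statement15 {t n : ℕ} (ht : 2 < t) (htn : t ≤ n) {lam : ℝ}
    (h1 : (t : ℝ) - 1 ≤ lam) (h2 : lam ≤ (n : ℝ) - 1) :
    ∃ s : ℕ → ℕ, (∀ k : ℕ, 1 ≤ k → s k = t ∨ s k = n) ∧
      GrowthEquiv (admProd s) (fun k => ⌈lam ^ k⌉₊) := by
  classical
  set s : ℕ → ℕ := fun k =>
    if k = 0 then t
    else if (auxH t n lam (k - 1) : ℝ) * ((n : ℝ) - 1) ≤ lam ^ k then n else t with hs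
  have hadm : ∀ k, admProd s k = auxH t n lam k := by
    intro k
    induction k with
    | zero => simp [admProd, auxH]
    | succ k ih =>
      have hprod : admProd s (k + 1) = admProd s k * (s (k + 1) - 1) := by
        unfold admProd
        rw [Finset.prod_Icc_succ_top (Nat.le_add_left 1 k)]
      rw [hprod, ih, auxH]
      have hsk : s (k + 1) =
          if (auxH t n lam k : ℝ) * ((n : ℝ) - 1) ≤ lam ^ (k + 1) then n else t := by
        simp [hs]
      rw [hsk]
      by_cases hc : (auxH t n lam k : ℝ) * ((n : ℝ) - 1) ≤ lam ^ (k + 1) <;>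
        simp [hc]
  refine ⟨s, ?_, ?_, ?_⟩
  · intro k hk
    simp only [hs]
    rw [if_neg (by omega)]
    by_cases hc : (auxH t n lam (k - 1) : ℝ) * ((n : ℝ) - 1) ≤ lam ^ k <;> simp [hc]
  · -- admProd s ⪯ ceil
    refine ⟨1, 0, fun k => ?_⟩
    have hb := (auxH_bounds ht htn h1 h2 k).1
    rw [hadm k]
    have : (auxH t n lam k : ℝ) ≤ (⌈lam ^ k⌉₊ : ℝ) := le_trans hb (Nat.le_ceil _)
    have := Nat.cast_le (α := ℝ).mp this
    simpa using this
  · -- ceil ⪯ admProd s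
    refine ⟨n - 1, 0, fun k => ?_⟩
    have hb := (auxH_bounds ht htn h1 h2 k).2
    simp only [Nat.add_zero]
    rw [hadm k]
    refine Nat.ceil_le.mpr ?_
    have hcast : (((n - 1) * auxH t n lam k : ℕ) : ℝ)
        = (auxH t n lam k : ℝ) * ((n : ℝ) - 1) := by
      push_cast [Nat.cast_sub (by omega : 1 ≤ n)]
      ring
    rw [hcast]
    exact hb
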